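/- In a commutative monoidal category, the interchange law holds: for morphisms a : x → y, b : x' → y', c : y → z, d : y' → z', one has (c ∘ a) + (d ∘ b) = (c + d) ∘ (a + b), where + denotes the monoidal product; consequently every morphism in the free commutative monoidal category on a Petri net can be written as a composite f_1 ∘ f_2 ∘ … ∘ f_n in which each f_i is a sum of generating transitions and identities. -/
import Mathlib


open CategoryTheory

structure PetriNet : Type 1 where
  T : Type
  S : Type
  src : T → (S →₀ ℕ)
  tgt : T → (S →₀ ℕ)

/-- Markings of a Petri net: the free commutative monoid `ℕ[S]` on places. -/
abbrev Marking (P : PetriNet) := P.S →₀ ℕ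

noncomputable instance (P : PetriNet) : AddCommMonoid (Marking P) :=
  inferInstanceAs (AddCommMonoid (P.S →₀ ℕ))

/-- Formal expressions for morphisms of the free commutative monoidal category on a Petri
net: generated by the transitions under identities, composition and monoidal sum. -/
inductive FExpr (P : PetriNet) : Marking P → Marking P → Type
  | gen (τ : P.T) : FExpr P (P.src τ) (P.tgt τ)
  | id (m : Marking P) : FExpr P m m
  | comp {a b c : Marking P} : FExpr P a b → FExpr P b c → FExpr P a c
  | add {a b c d : Marking P} : FExpr P a b → FExpr P c d → FExpr P (a + c) (b + d)

/-- Recasting an expression along equalities of its endpoints. -/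
def FExpr.recast {P : PetriNet} {a b a' b' : Marking P} (h1 : a = a') (h2 : b = b')
    (e : FExpr P a b) : FExpr P a' b' := h1 ▸ h2 ▸ e

/-- The congruence generating the free commutative monoidal category: category laws,
the interchange law, and the commutative monoid laws for the monoidal sum. -/
inductive FRel (P : PetriNet) : ∀ {a b : Marking P}, FExpr P a b → FExpr P a b → Prop
  | refl {a b} (e : FExpr P a b) : FRel P e e
  | symm {a b} {e₁ e₂ : FExpr P a b} : FRel P e₁ e₂ → FRel P e₂ e₁
  | trans {a b} {e₁ e₂ e₃ : FExpr P a b} : FRel P e₁ e₂ → FRel P e₂ e₃ → FRel P e₁ e₃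
  | comp_congr {a b c} {e₁ e₂ : FExpr P a b} {f₁ f₂ : FExpr P b c} :
      FRel P e₁ e₂ → FRel P f₁ f₂ → FRel P (e₁.comp f₁) (e₂.comp f₂)
  | add_congr {a b c d} {e₁ e₂ : FExpr P a b} {f₁ f₂ : FExpr P c d} :
      FRel P e₁ e₂ → FRel P f₁ f₂ → FRel P (e₁.add f₁) (e₂.add f₂)
  | assoc {a b c d} (e : FExpr P a b) (f : FExpr P b c) (g : FExpr P c d) :
      FRel P ((e.comp f).comp g) (e.comp (f.comp g))
  | id_comp {a b} (e : FExpr P a b) : FRel P ((FExpr.id a).comp e) e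
  | comp_id {a b} (e : FExpr P a b) : FRel P (e.comp (FExpr.id b)) e
  | interchange {a b c a' b' c'} (e : FExpr P a b) (f : FExpr P b c)
      (e' : FExpr P a' b') (f' : FExpr P b' c') :
      FRel P ((e.comp f).add (e'.comp f')) ((e.add e').comp (f.add f'))
  | add_id {m n : Marking P} : FRel P ((FExpr.id m).add (FExpr.id n)) (FExpr.id (m + n))
  | add_assoc {a b c d e f} (x : FExpr P a b) (y : FExpr P c d) (z : FExpr P e f) :
      FRel P (((x.add y).add z).recast (add_assoc a c e) (add_assoc b d f))
        (x.add (y.add z))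
  | add_comm {a b c d} (x : FExpr P a b) (y : FExpr P c d) :
      FRel P ((x.add y).recast (add_comm a c) (add_comm b d)) (y.add x)
  | add_zero {a b} (x : FExpr P a b) :
      FRel P ((x.add (FExpr.id 0)).recast (add_zero a) (add_zero b)) x

/-- Morphisms of the free commutative monoidal category on `P`: expressions modulo the
congruence. -/
abbrev FHom (P : PetriNet) (a b : Marking P) := Quot (@FRel P a b)

/-- The free commutative monoidal category `FP` on a Petri net `P` (as a category). -/
def FP (P : PetriNet) := Marking P

noncomputable instance (P : PetriNet) : AddCommMonoid (FP P) := inferInstanceAs (AddCommMonoid (Marking P))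

instance FP.category (P : PetriNet) : Category (FP P) where
  Hom a b := FHom P a b
  id a := Quot.mk _ (FExpr.id a)
  comp {a b c} f g :=
    Quot.lift₂ (fun e₁ e₂ => Quot.mk _ (e₁.comp e₂))
      (fun e f₁ f₂ h => Quot.sound (FRel.comp_congr (FRel.refl e) h))
      (fun e₁ e₂ f h => Quot.sound (FRel.comp_congr h (FRel.refl f))) f g
  id_comp f := by
    induction f using Quot.ind
    exact Quot.sound (FRel.id_comp _)
  comp_id f := by
    induction f using Quot.ind
    exact Quot.sound (FRel.comp_id _)
  assoc {a b c d} f g h := by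
    induction f using Quot.ind
    induction g using Quot.ind
    induction h using Quot.ind
    exact Quot.sound (FRel.assoc _ _ _)

/-- Markings regarded as objects of `FP`. -/
def toFP {P : PetriNet} (m : Marking P) : FP P := m

/-- The generating morphism of `FP` corresponding to a transition. -/
def qgen {P : PetriNet} (τ : P.T) : toFP (P.src τ) ⟶ toFP (P.tgt τ) :=
  show FHom P (P.src τ) (P.tgt τ) from Quot.mk _ (FExpr.gen τ)

/-- The monoidal sum of morphisms in `FP`. -/
def qadd {P : PetriNet} {a b c d : FP P} (f : a ⟶ b) (g : c ⟶ d) :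
    (a + c : FP P) ⟶ (b + d : FP P) :=
  show FHom P (a + c) (b + d) from
    Quot.lift₂ (fun e₁ e₂ => Quot.mk _ (e₁.add e₂))
      (fun e f₁ f₂ h => Quot.sound (FRel.add_congr (FRel.refl e) h))
      (fun e₁ e₂ f h => Quot.sound (FRel.add_congr h (FRel.refl f)))
      (show FHom P a b from f) (show FHom P c d from g)

/-- A commutative monoidal category (a commutative monoid object in `Cat`), written
additively. -/
class CommMonoidalCat (C : Type u) [Category.{v} C] extends AddCommMonoid C where
  addHom : ∀ {a b c d : C}, (a ⟶ b) → (c ⟶ d) → ((a + c) ⟶ (b + d))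
  addHom_id : ∀ a c : C, addHom (𝟙 a) (𝟙 c) = 𝟙 (a + c)
  addHom_comp : ∀ {a b c a' b' c' : C} (f : a ⟶ b) (g : b ⟶ c) (f' : a' ⟶ b') (g' : b' ⟶ c'),
    addHom (f ≫ g) (f' ≫ g') = addHom f f' ≫ addHom g g'
  addHom_assoc : ∀ {a b c d e f : C} (u : a ⟶ b) (v : c ⟶ d) (w : e ⟶ f),
    addHom (addHom u v) w =
      eqToHom (add_assoc a c e) ≫ addHom u (addHom v w) ≫ eqToHom (add_assoc b d f).symm
  addHom_comm : ∀ {a b c d : C} (u : a ⟶ b) (v : c ⟶ d),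
    addHom u v = eqToHom (add_comm a c) ≫ addHom v u ≫ eqToHom (add_comm d b)
  addHom_zero : ∀ {a b : C} (u : a ⟶ b),
    addHom u (𝟙 (0 : C)) = eqToHom (add_zero a) ≫ u ≫ eqToHom (add_zero b).symm

/-- Expressions which are monoidal sums of generating transitions and identities. -/
inductive IsLayer {P : PetriNet} : ∀ {a b : Marking P}, FExpr P a b → Prop
  | gen (τ : P.T) : IsLayer (FExpr.gen τ)
  | id (m : Marking P) : IsLayer (FExpr.id m)
  | add {a b c d} {e : FExpr P a b} {e' : FExpr P c d} :
      IsLayer e → IsLayer e' → IsLayer (e.add e')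

/-- Expressions which are composites `f₁ ∘ f₂ ∘ … ∘ fₙ` of layers. -/
inductive IsLayerComposite {P : PetriNet} : ∀ {a b : Marking P}, FExpr P a b → Prop
  | layer {a b} {e : FExpr P a b} : IsLayer e → IsLayerComposite e
  | comp {a b c} {e : FExpr P a b} {e' : FExpr P b c} :
      IsLayer e → IsLayerComposite e' → IsLayerComposite (e.comp e')


private lemma layer_addLC {P : PetriNet} {a b : Marking P} (e : FExpr P a b)
    (he : IsLayer e) {c d : Marking P} {f : FExpr P c d} (hf : IsLayerComposite f) :
    ∃ g : FExpr P (a + c) (b + d), FRel P (e.add f) g ∧ IsLayerComposite g := by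
  induction hf generalizing a b e with
  | layer hl => exact ⟨_, FRel.refl _, IsLayerComposite.layer (IsLayer.add he hl)⟩
  | comp hl _ ih =>
    obtain ⟨g, hg, hgc⟩ := ih (FExpr.id b) (IsLayer.id b)
    refine ⟨_, ?_, IsLayerComposite.comp (IsLayer.add he hl) hgc⟩
    refine FRel.trans (FRel.add_congr (FRel.symm (FRel.comp_id e)) (FRel.refl _)) ?_
    exact FRel.trans (FRel.interchange _ _ _ _) (FRel.comp_congr (FRel.refl _) hg)

private lemma addLC {P : PetriNet} {a b c d : Marking P} {e : FExpr P a b}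
    {f : FExpr P c d} (he : IsLayerComposite e) (hf : IsLayerComposite f) :
    ∃ g : FExpr P (a + c) (b + d), FRel P (e.add f) g ∧ IsLayerComposite g := by
  induction he with
  | layer hl => exact layer_addLC _ hl hf
  | @comp _ m _ l rest hl _ ih =>
    obtain ⟨g, hg, hgc⟩ := ih
    refine ⟨_, ?_, IsLayerComposite.comp (IsLayer.add hl (IsLayer.id c)) hgc⟩
    refine FRel.trans (FRel.add_congr (FRel.refl _) (FRel.symm (FRel.id_comp f))) ?_
    exact FRel.trans (FRel.interchange _ _ _ _) (FRel.comp_congr (FRel.refl _) hg)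

private lemma compLC {P : PetriNet} {a b c : Marking P} {e : FExpr P a b}
    {f : FExpr P b c} (he : IsLayerComposite e) (hf : IsLayerComposite f) :
    ∃ g : FExpr P a c, FRel P (e.comp f) g ∧ IsLayerComposite g := by
  induction he generalizing c with
  | layer hl => exact ⟨_, FRel.refl _, IsLayerComposite.comp hl hf⟩
  | comp hl _ ih =>
    obtain ⟨g, hg, hgc⟩ := ih hf
    exact ⟨_, FRel.trans (FRel.assoc _ _ _) (FRel.comp_congr (FRel.refl _) hg),
      IsLayerComposite.comp hl hgc⟩

private lemma toLC {P : PetriNet} {a b : Marking P} (e : FExpr P a b) :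
    ∃ g : FExpr P a b, FRel P e g ∧ IsLayerComposite g := by
  induction e with
  | gen τ => exact ⟨_, FRel.refl _, IsLayerComposite.layer (IsLayer.gen τ)⟩
  | id m => exact ⟨_, FRel.refl _, IsLayerComposite.layer (IsLayer.id m)⟩
  | comp e f ihe ihf =>
    obtain ⟨g1, h1, c1⟩ := ihe; obtain ⟨g2, h2, c2⟩ := ihf
    obtain ⟨g, hg, cg⟩ := compLC c1 c2
    exact ⟨g, FRel.trans (FRel.comp_congr h1 h2) hg, cg⟩
  | add e f ihe ihf =>
    obtain ⟨g1, h1, c1⟩ := ihe; obtain ⟨g2, h2, c2⟩ := ihf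
    obtain ⟨g, hg, cg⟩ := addLC c1 c2
    exact ⟨g, FRel.trans (FRel.add_congr h1 h2) hg, cg⟩

/-- In a commutative monoidal category the interchange law
`(c ∘ a) + (d ∘ b) = (c + d) ∘ (a + b)` holds; consequently every morphism of the free
commutative monoidal category on a Petri net can be written as a composite
`f₁ ∘ f₂ ∘ … ∘ fₙ` in which each `fᵢ` is a monoidal sum of generating transitions and
identities. -/
theorem interchange_and_decomposition :
    (∀ (C : Type u) (_ : Category.{v} C) (_ : CommMonoidalCat C)
      {x y z x' y' z' : C} (a : x ⟶ y) (c : y ⟶ z) (b : x' ⟶ y') (d : y' ⟶ z'),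
      CommMonoidalCat.addHom (a ≫ c) (b ≫ d) =
        CommMonoidalCat.addHom a b ≫ CommMonoidalCat.addHom c d) ∧
    (∀ (P : PetriNet) (a b : FP P) (f : a ⟶ b),
      ∃ e : FExpr P a b, Quot.mk _ e = f ∧ IsLayerComposite e) := by
  constructor
  · intro C _ _ x y z x' y' z' a c b d
    exact CommMonoidalCat.addHom_comp a c b d
  · intro P a b f
    induction f using Quot.ind with
    | _ e =>
      obtain ⟨g, hg, cg⟩ := toLC e
      exact ⟨g, Quot.sound (FRel.symm hg), cg⟩
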